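/- Let K be a triangulated category with split idempotents and F : K → Ab a homological functor. For every finitely presentable left K-module X (object of (mod K^op)^op), there is a natural isomorphism F*(X) ≅ Hom_{K^op}(X, F), where F* is the exact extension of F to the abelianization. -/

import Mathlib

open CategoryTheory CategoryTheory.Limits CategoryTheory.Pretriangulated

universe v u

namespace Statement2

variable (K : Type u) [Category.{v} K] [Preadditive K]

/-- A left `K`-module (i.e. a right `Kᵒᵖ`-module) `X : K ⥤ Ab` is finitely presentable
if it admits an exact sequence `K(K₁,-) ⟶ K(K₀,-) ⟶ X ⟶ 0`. -/
def IsFinitelyPresentable (X : K ⥤ AddCommGrpCat.{v}) : Prop :=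
  ∃ (K₁ K₀ : K) (α : preadditiveCoyoneda.obj (Opposite.op K₁) ⟶
      preadditiveCoyoneda.obj (Opposite.op K₀))
    (π : preadditiveCoyoneda.obj (Opposite.op K₀) ⟶ X) (w : α ≫ π = 0),
    Nonempty (IsColimit (CokernelCofork.ofπ π w))

/-- The category `mod Kᵒᵖ` of finitely presentable left `K`-modules; its opposite
`(mod Kᵒᵖ)ᵒᵖ` is the abelianization of a triangulated category `K`. -/
def ModKop : Type (max u (v + 1)) :=
  ObjectProperty.FullSubcategory (IsFinitelyPresentable K)

instance : Category (ModKop K) :=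
  ObjectProperty.FullSubcategory.category _

lemma coyoneda_isFinitelyPresentable (A : K) :
    IsFinitelyPresentable K (preadditiveCoyoneda.obj (Opposite.op A)) :=
  ⟨A, A, 0, 𝟙 _, by simp, ⟨CokernelCofork.IsColimit.ofId _ rfl⟩⟩

/-- The Yoneda embedding `H_K : K ⥤ (mod Kᵒᵖ)ᵒᵖ`, `A ↦ K(A,-)`. -/
def yonedaFP : K ⥤ (ModKop K)ᵒᵖ where
  obj A := Opposite.op ⟨preadditiveCoyoneda.obj (Opposite.op A),
    coyoneda_isFinitelyPresentable K A⟩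
  map f := (show (_ : ModKop K) ⟶ _ from ObjectProperty.homMk (preadditiveCoyoneda.map f.op)).op
  map_id A := by
    apply Quiver.Hom.unop_inj
    simp [ModKop]
    rfl
  map_comp f g := by
    apply Quiver.Hom.unop_inj
    simp [ModKop]
    rfl

/-! ### Auxiliary material -/

variable {K}

instance fsPreadditive (Z : (K ⥤ AddCommGrpCat.{v}) → Prop) :
    Preadditive (ObjectProperty.FullSubcategory Z) :=
  Preadditive.fullSubcategory Z

instance : Preadditive (ModKop K) :=
  inferInstanceAs (Preadditive (ObjectProperty.FullSubcategory (IsFinitelyPresentable K)))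

instance : (ObjectProperty.ι (IsFinitelyPresentable K)).Additive :=
  { map_add := rfl }

/-- Extensionality for morphisms in `ModKop K`. -/
lemma modHom_ext {X Y : ModKop K} {f g : X ⟶ Y}
    (h : ∀ (A : K) (x : X.obj.obj A), f.hom.app A x = g.hom.app A x) : f = g :=
  ObjectProperty.hom_ext _ <| NatTrans.ext (funext fun A => AddCommGrpCat.ext (h A))

lemma app_surjective {W X Y : K ⥤ AddCommGrpCat.{v}} {α : W ⟶ X} {π : X ⟶ Y}
    {w : α ≫ π = 0} (hc : IsColimit (CokernelCofork.ofπ π w)) (A : K) :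
    Function.Surjective (π.app A) := by
  have h1 := isColimitCoforkMapOfIsColimit' ((evaluation K AddCommGrpCat.{v}).obj A) w hc
  have h2 := epi_of_isColimit_cofork h1
  simp only [Cofork.π_ofπ] at h2
  exact (AddCommGrpCat.epi_iff_surjective _).1 h2

lemma map_add_apply (X : ModKop K) {A B : K} (g g' : A ⟶ B) (x : X.obj.obj A) :
    X.obj.map (g + g') x = X.obj.map g x + X.obj.map g' x := by
  obtain ⟨K₁, K₀, α, π, w, ⟨hc⟩⟩ := X.property
  obtain ⟨u, rfl⟩ := app_surjective hc A x
  have n : ∀ (f : A ⟶ B), X.obj.map f (π.app A u) = π.app B (u ≫ f) :=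
    fun f => (congrArg (fun (t : _ ⟶ X.obj.obj B) => t u) (π.naturality f)).symm
  rw [n, n, n]
  exact (congrArg (fun t => π.app B t) (Preadditive.comp_add _ _ _ u g g')).trans (map_add _ _ _)

/-- The additive Yoneda lemma map: an element `x : X(A)` gives `K(A,-) ⟶ X`. -/
def hatm {X : ModKop K} {A : K} (x : X.obj.obj A) : ((yonedaFP K).obj A).unop ⟶ X :=
  ObjectProperty.homMk (show preadditiveCoyoneda.obj (Opposite.op A) ⟶ X.obj from
  { app := fun B => AddCommGrpCat.ofHom (AddMonoidHom.mk' (fun (g : A ⟶ B) => X.obj.map g x)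
      (fun g g' => map_add_apply X g g' x))
    naturality := fun B C h => AddCommGrpCat.ext fun g =>
      (congrArg (fun (t : _ ⟶ X.obj.obj C) => t x) (X.obj.map_comp g h)) })

lemma hatm_comp {X Y : ModKop K} (m : X ⟶ Y) {A : K} (x : X.obj.obj A) :
    hatm (m.hom.app A x) = hatm x ≫ m :=
  modHom_ext fun B g =>
    (congrArg (fun (t : _ ⟶ Y.obj.obj B) => t x) (m.hom.naturality g)).symm

lemma hatm_rep {A B : K} (g : A ⟶ B) :
    (hatm (X := ((yonedaFP K).obj A).unop) g) = ((yonedaFP K).map g).unop :=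
  modHom_ext fun _ _ => rfl

lemma hatm_map {X : ModKop K} {A B : K} (h : A ⟶ B) (x : X.obj.obj A) :
    hatm (X.obj.map h x) = ((yonedaFP K).map h).unop ≫ hatm x :=
  modHom_ext fun C g =>
    (congrArg (fun (t : _ ⟶ X.obj.obj C) => t x) (X.obj.map_comp h g)).symm

section Zero

open ZeroObject

lemma isZero_zeroModKop [HasZeroObject K] :
    IsZero (⟨preadditiveCoyoneda.obj (Opposite.op (0 : K)),
      coyoneda_isFinitelyPresentable K 0⟩ : ModKop K) := by
  refine ⟨fun Y => ⟨⟨⟨0⟩, fun f => ?_⟩⟩, fun Y => ⟨⟨⟨0⟩, fun f => ?_⟩⟩⟩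
  · exact modHom_ext fun A x => by
      rw [(isZero_zero K).eq_of_src x 0]; exact (map_zero _).trans (map_zero _).symm
  · exact modHom_ext fun A y => (isZero_zero K).eq_of_src (f.hom.app A y) _

instance [HasZeroObject K] : HasZeroObject (ModKop K) :=
  ⟨_, isZero_zeroModKop⟩

lemma preservesZero [HasZeroObject K] (Fs : (ModKop K)ᵒᵖ ⥤ AddCommGrpCat.{v})
    [PreservesFiniteLimits Fs] [PreservesFiniteColimits Fs] :
    Fs.PreservesZeroMorphisms := by
  have ht : IsTerminal (Fs.obj (0 : (ModKop K)ᵒᵖ)) :=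
    IsTerminal.isTerminalObj Fs _ (isZero_zero _).isTerminal
  have hi : IsInitial (Fs.obj (0 : (ModKop K)ᵒᵖ)) :=
    IsInitial.isInitialObj Fs _ (isZero_zero _).isInitial
  have hz : IsZero (Fs.obj (0 : (ModKop K)ᵒᵖ)) :=
    ⟨fun Y => ⟨⟨⟨hi.to Y⟩, fun f => hi.hom_ext f _⟩⟩,
     fun Y => ⟨⟨⟨ht.from Y⟩, fun f => ht.hom_ext f _⟩⟩⟩
  constructor
  intro X Y
  rw [show (0 : X ⟶ Y) = (0 : X ⟶ (0 : (ModKop K)ᵒᵖ)) ≫ 0 from (zero_comp).symm,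
    Fs.map_comp, hz.eq_of_tgt (Fs.map (0 : X ⟶ (0 : (ModKop K)ᵒᵖ))) 0, zero_comp]

end Zero

section Main

variable (F : K ⥤ AddCommGrpCat.{v}) [F.Additive]
  (Fs : (ModKop K)ᵒᵖ ⥤ AddCommGrpCat.{v}) (hFs : yonedaFP K ⋙ Fs ≅ F)

/-- `hatm x` viewed as a morphism in `(ModKop K)ᵒᵖ`. -/
def hatOp {X : (ModKop K)ᵒᵖ} {A : K} (x : X.unop.obj.obj A) : X ⟶ (yonedaFP K).obj A :=
  Quiver.Hom.op (hatm x)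

def eApp (X : (ModKop K)ᵒᵖ) (a : Fs.obj X) {A : K} (x : X.unop.obj.obj A) : F.obj A :=
  hFs.hom.app A (Fs.map (hatOp x) a)

lemma eR {A B : K} (f : A ⟶ B) (b : Fs.obj ((yonedaFP K).obj A)) :
    hFs.hom.app B (Fs.map ((yonedaFP K).map f) b) = F.map f (hFs.hom.app A b) :=
  congrArg (fun (t : Fs.obj ((yonedaFP K).obj A) ⟶ F.obj B) => t b) (hFs.hom.naturality f)

lemma eApp_map (X Y : (ModKop K)ᵒᵖ) (g : X ⟶ Y) (a : Fs.obj X) {A : K}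
    (x : Y.unop.obj.obj A) :
    eApp F Fs hFs Y (Fs.map g a) x = eApp F Fs hFs X a (g.unop.hom.app A x) := by
  unfold eApp
  have h1 : (g ≫ hatOp (X := Y) x) = hatOp (X := X) (g.unop.hom.app A x) :=
    congrArg Quiver.Hom.op (hatm_comp g.unop x).symm
  rw [← h1, Fs.map_comp]
  rfl

lemma eApp_natur (X : (ModKop K)ᵒᵖ) (a : Fs.obj X) {A B : K} (h : A ⟶ B)
    (x : X.unop.obj.obj A) :
    eApp F Fs hFs X a (X.unop.obj.map h x) = F.map h (eApp F Fs hFs X a x) := by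
  unfold eApp
  have h1 : hatOp (X := X) (X.unop.obj.map h x) = hatOp x ≫ (yonedaFP K).map h :=
    congrArg Quiver.Hom.op (hatm_map h x)
  rw [h1, Fs.map_comp]
  exact eR F Fs hFs h (Fs.map (hatOp x) a)

lemma eApp_pres (X : (ModKop K)ᵒᵖ) (a : Fs.obj X) {K₀ : K}
    (πm : ((yonedaFP K).obj K₀).unop ⟶ X.unop) {A : K} (t : K₀ ⟶ A) :
    eApp F Fs hFs X a (πm.hom.app A t) = F.map t (hFs.hom.app K₀ (Fs.map πm.op a)) := by
  unfold eApp
  have h1 : hatOp (X := X) (πm.hom.app A t) = πm.op ≫ (yonedaFP K).map t := by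
    have := hatm_comp πm (A := A) t
    rw [hatm_rep] at this
    exact congrArg Quiver.Hom.op this
  rw [h1, Fs.map_comp]
  exact eR F Fs hFs t (Fs.map πm.op a)

lemma eApp_add (X : (ModKop K)ᵒᵖ) (a : Fs.obj X) {A : K} (x y : X.unop.obj.obj A) :
    eApp F Fs hFs X a (x + y) = eApp F Fs hFs X a x + eApp F Fs hFs X a y := by
  obtain ⟨K₁, K₀, α, π, w, ⟨hc⟩⟩ := X.unop.property
  obtain ⟨u, rfl⟩ := app_surjective hc A x
  obtain ⟨v, rfl⟩ := app_surjective hc A y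
  let πm : ((yonedaFP K).obj K₀).unop ⟶ X.unop := ObjectProperty.homMk π
  rw [show π.app A u + π.app A v = πm.hom.app A (u + v) from (map_add _ _ _).symm,
    show π.app A u = πm.hom.app A u from rfl, show π.app A v = πm.hom.app A v from rfl,
    ]
  erw [eApp_pres F Fs hFs X a πm, eApp_pres F Fs hFs X a πm,
    eApp_pres F Fs hFs X a πm]
  erw [F.map_add]
  rfl

def eHom (X : (ModKop K)ᵒᵖ) (a : Fs.obj X) : X.unop.obj ⟶ F where
  app A := AddCommGrpCat.ofHom (AddMonoidHom.mk' (fun x => eApp F Fs hFs X a x) (eApp_add F Fs hFs X a))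
  naturality A B h := AddCommGrpCat.ext fun x => eApp_natur F Fs hFs X a h x

lemma eHom_map (X Y : (ModKop K)ᵒᵖ) (g : X ⟶ Y) (a : Fs.obj X) :
    eHom F Fs hFs Y (Fs.map g a)
      = (show Y.unop.obj ⟶ X.unop.obj from g.unop.hom) ≫ eHom F Fs hFs X a :=
  NatTrans.ext (funext fun A => AddCommGrpCat.ext fun x => eApp_map F Fs hFs X Y g a x)

lemma eHom_add (X : (ModKop K)ᵒᵖ) (a b : Fs.obj X) :
    eHom F Fs hFs X (a + b) = eHom F Fs hFs X a + eHom F Fs hFs X b :=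
  NatTrans.ext (funext fun A => AddCommGrpCat.ext fun x => by
    show hFs.hom.app A (Fs.map (hatOp x) (a + b)) = _
    rw [map_add, map_add]
    rfl)

lemma eHom_zero (X : (ModKop K)ᵒᵖ) : eHom F Fs hFs X 0 = 0 :=
  NatTrans.ext (funext fun A => AddCommGrpCat.ext fun x => by
    show hFs.hom.app A (Fs.map (hatOp x) 0) = _
    rw [map_zero, map_zero]
    rfl)

lemma eApp_rep (A : K) (a : Fs.obj ((yonedaFP K).obj A)) {B : K} (x : A ⟶ B) :
    eApp F Fs hFs ((yonedaFP K).obj A) a x = F.map x (hFs.hom.app A a) := by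
  unfold eApp
  have h1 : hatOp (X := (yonedaFP K).obj A) x = (yonedaFP K).map x :=
    congrArg Quiver.Hom.op (hatm_rep x)
  rw [h1]
  exact eR F Fs hFs x a

lemma eHom_bij_rep (A : K) :
    Function.Bijective (eHom F Fs hFs ((yonedaFP K).obj A)) := by
  constructor
  · intro a a' h
    have h1 : eApp F Fs hFs ((yonedaFP K).obj A) a (𝟙 A)
        = eApp F Fs hFs ((yonedaFP K).obj A) a' (𝟙 A) :=
      congrArg (fun (ψ : _ ⟶ F) => ψ.app A (𝟙 A)) h
    rw [eApp_rep, eApp_rep, F.map_id] at h1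
    have h2 : hFs.hom.app A a = hFs.hom.app A a' := h1
    have h3 := congrArg (hFs.inv.app A) h2
    have h4 : ∀ b : Fs.obj ((yonedaFP K).obj A), hFs.inv.app A (hFs.hom.app A b) = b := by
      intro b
      exact congrArg (fun (t : Fs.obj ((yonedaFP K).obj A) ⟶ _) => t b)
        (hFs.hom_inv_id_app A)
    rwa [h4, h4] at h3
  · intro ψ
    refine ⟨hFs.inv.app A (ψ.app A (𝟙 A)), ?_⟩
    refine NatTrans.ext (funext fun B => AddCommGrpCat.ext fun x => ?_)
    show eApp F Fs hFs ((yonedaFP K).obj A) _ x = ψ.app B x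
    erw [eApp_rep]
    have h5 : hFs.hom.app A (hFs.inv.app A (ψ.app A (𝟙 A))) = ψ.app A (𝟙 A) :=
      congrArg (fun (t : F.obj A ⟶ F.obj A) => t (ψ.app A (𝟙 A))) (hFs.inv_hom_id_app A)
    rw [h5]
    have h6 : F.map x (ψ.app A (𝟙 A)) = ψ.app B (𝟙 A ≫ x) :=
      (congrArg (fun (t : _ ⟶ F.obj B) => t (𝟙 A)) (ψ.naturality x)).symm
    erw [Category.id_comp] at h6
    exact h6

end Main

set_option synthInstance.maxHeartbeats 400000 in
/-- Let `K` be a triangulated category with split idempotents and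
`F : K ⥤ Ab` a homological functor. For the exact extension
`F* : (mod Kᵒᵖ)ᵒᵖ ⥤ Ab` of `F` (an exact functor with `F ≅ F* ∘ H_K`), there is a natural
isomorphism `F*(X) ≅ Hom_{Kᵒᵖ}(X, F)` for every finitely presentable left `K`-module `X`. -/
theorem statement2 [HasZeroObject K] [HasShift K ℤ]
    [∀ n : ℤ, (shiftFunctor K n).Additive] [Pretriangulated K] [IsIdempotentComplete K]
    (F : K ⥤ AddCommGrpCat.{v}) [F.IsHomological]
    (Fs : (ModKop K)ᵒᵖ ⥤ AddCommGrpCat.{v})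
    [PreservesFiniteLimits Fs] [PreservesFiniteColimits Fs]
    (hFs : yonedaFP K ⋙ Fs ≅ F) :
    ∃ e : ∀ X : (ModKop K)ᵒᵖ, Fs.obj X ≃+ (X.unop.obj ⟶ F),
      ∀ (X Y : (ModKop K)ᵒᵖ) (g : X ⟶ Y) (a : Fs.obj X),
        e Y (Fs.map g a) = (show Y.unop.obj ⟶ X.unop.obj from g.unop.hom) ≫ e X a := by
  haveI := preservesZero Fs
  have bij : ∀ X : (ModKop K)ᵒᵖ, Function.Bijective (eHom F Fs hFs X) := by
    intro X
    obtain ⟨K₁, K₀, α, π, w, ⟨hc⟩⟩ := X.unop.property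
    let αm : ((yonedaFP K).obj K₁).unop ⟶ ((yonedaFP K).obj K₀).unop := ObjectProperty.homMk α
    let πm : ((yonedaFP K).obj K₀).unop ⟶ X.unop := ObjectProperty.homMk π
    have wm : αm ≫ πm = 0 := ObjectProperty.hom_ext _ w
    haveI := fullyFaithful_reflectsColimits.{0, 0}
      (ObjectProperty.ι (IsFinitelyPresentable K))
    have hR : ReflectsColimitsOfSize.{0, 0} (ObjectProperty.ι (IsFinitelyPresentable K)) :=
      inferInstance
    haveI : ReflectsColimit (parallelPair αm 0) (ObjectProperty.ι (IsFinitelyPresentable K)) :=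
      ReflectsColimitsOfShape.reflectsColimit
        (self := ReflectsColimitsOfSize.reflectsColimitsOfShape (self := hR))
    have hcm : IsColimit (CokernelCofork.ofπ πm wm) := by
      exact (this.reflects ((isColimitMapCoconeCoforkEquiv'
        (ObjectProperty.ι (IsFinitelyPresentable K)) wm).symm hc)).some
    have hkf := CokernelCofork.IsColimit.ofπOp πm wm hcm
    have hFsk := isLimitForkMapOfIsLimit' Fs _ hkf
    have mono1 : Mono (Fs.map πm.op) := by
      have := mono_of_isLimit_fork hFsk
      simpa using this
    have inj1 : Function.Injective (Fs.map πm.op) :=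
      (AddCommGrpCat.mono_iff_injective _).1 mono1
    let S : ShortComplex AddCommGrpCat.{v} :=
      { X₁ := Fs.obj X
        X₂ := Fs.obj ((yonedaFP K).obj K₀)
        X₃ := Fs.obj ((yonedaFP K).obj K₁)
        f := Fs.map πm.op
        g := Fs.map αm.op
        zero := by
          rw [← Fs.map_comp, ← op_comp, wm, op_zero, Fs.map_zero] }
    have hex : S.Exact := S.exact_of_f_is_kernel hFsk
    have lift1 := S.ab_exact_iff.1 hex
    have epi1 : Epi π := by
      have := epi_of_isColimit_cofork hc
      simpa using this
    constructor
    · intro a a' h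
      apply inj1
      apply (eHom_bij_rep F Fs hFs K₀).1
      show eHom F Fs hFs ((yonedaFP K).obj K₀) (Fs.map πm.op a)
        = eHom F Fs hFs ((yonedaFP K).obj K₀) (Fs.map πm.op a')
      rw [eHom_map F Fs hFs X _ πm.op a, eHom_map F Fs hFs X _ πm.op a', h]
    · intro ψ
      obtain ⟨z, hz⟩ := (eHom_bij_rep F Fs hFs K₀).2 (π ≫ ψ)
      have hz0 : Fs.map αm.op z = 0 := by
        apply (eHom_bij_rep F Fs hFs K₁).1
        show eHom F Fs hFs ((yonedaFP K).obj K₁) (Fs.map αm.op z)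
          = eHom F Fs hFs ((yonedaFP K).obj K₁) 0
        rw [eHom_map F Fs hFs _ _ αm.op z, eHom_zero, hz]
        show (α : preadditiveCoyoneda.obj (Opposite.op K₁) ⟶ _) ≫ π ≫ ψ = 0
        rw [← Category.assoc, w, zero_comp]
      obtain ⟨a, ha⟩ := lift1 z hz0
      refine ⟨a, ?_⟩
      have h7 : π ≫ eHom F Fs hFs X a = π ≫ ψ := by
        have h8 := eHom_map F Fs hFs X ((yonedaFP K).obj K₀) πm.op a
        rw [ha, hz] at h8
        exact h8.symm
      exact (cancel_epi π).1 h7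
  refine ⟨fun X => AddEquiv.mk' (Equiv.ofBijective _ (bij X)) (eHom_add F Fs hFs X), ?_⟩
  intro X Y g a
  exact eHom_map F Fs hFs X Y g a


end Statement2
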